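/- Let n ≥ 2, let s : Fin n → EuclideanSpace ℝ (Fin n) be the centered standard simplex vertices, and let i ≠ j. Then the orthogonal reflection R of EuclideanSpace ℝ (Fin n) in the hyperplane {x : ⟪x, s i − s j⟫ = 0} (the reflection across the orthogonal complement of span(s i − s j)) satisfies R (s i) = s j, R (s j) = s i, and R (s k) = s k for every k ≠ i, j. (Swapping two simplex vertices is realized by a single reflection fixing the remaining vertices.) -/

import Mathlib

open scoped RealInnerProductSpace

/-- The centered standard simplex vertices: `s i = e_i - (1/n) • ∑ j, e_j`,
where `e_i` is the standard basis of `EuclideanSpace ℝ (Fin n)`. -/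
noncomputable def simplexPt (n : ℕ) (i : Fin n) : EuclideanSpace ℝ (Fin n) :=
  EuclideanSpace.single i (1 : ℝ) - ((1 : ℝ) / n) • ∑ j, EuclideanSpace.single j (1 : ℝ)

/-- The orthogonal reflection in the hyperplane through the origin with normal vector `v`:
`x ↦ x - 2 (⟪x, v⟫ / ‖v‖²) • v`. -/
noncomputable def reflHyp (n : ℕ) (v : EuclideanSpace ℝ (Fin n))
    (x : EuclideanSpace ℝ (Fin n)) : EuclideanSpace ℝ (Fin n) :=
  x - (2 * ⟪x, v⟫ / ‖v‖ ^ 2) • v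

theorem reflection_swaps_simplex_vertices (n : ℕ) (hn : 2 ≤ n) (i j : Fin n) (hij : i ≠ j) :
    reflHyp n (simplexPt n i - simplexPt n j) (simplexPt n i) = simplexPt n j ∧
    reflHyp n (simplexPt n i - simplexPt n j) (simplexPt n j) = simplexPt n i ∧
    ∀ k : Fin n, k ≠ i → k ≠ j →
      reflHyp n (simplexPt n i - simplexPt n j) (simplexPt n k) = simplexPt n k := by
  have hv : simplexPt n i - simplexPt n j
      = EuclideanSpace.single i (1 : ℝ) - EuclideanSpace.single j (1 : ℝ) := by
    simp only [simplexPt]; abel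
  set v : EuclideanSpace ℝ (Fin n) :=
    EuclideanSpace.single i (1 : ℝ) - EuclideanSpace.single j (1 : ℝ) with hvdef
  have hinn : ∀ x : EuclideanSpace ℝ (Fin n), ⟪x, v⟫ = x i - x j := by
    intro x
    simp [hvdef, inner_sub_right, EuclideanSpace.inner_single_right]
  have hnorm : ‖v‖ ^ 2 = 2 := by
    rw [← real_inner_self_eq_norm_sq, hinn]
    simp [hvdef, EuclideanSpace.single_apply, hij, hij.symm]
    norm_num
  have hsum : ∀ m : Fin n, (∑ l, EuclideanSpace.single l (1 : ℝ) :
      EuclideanSpace ℝ (Fin n)) m = 1 := by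
    intro m
    have : (∑ l, EuclideanSpace.single l (1 : ℝ) : EuclideanSpace ℝ (Fin n)) m
        = ∑ l, (EuclideanSpace.single l (1 : ℝ) : EuclideanSpace ℝ (Fin n)) m :=
      by rw [WithLp.ofLp_sum, Finset.sum_apply]
    rw [this]
    simp [EuclideanSpace.single_apply]
  have hcoord : ∀ k m : Fin n, simplexPt n k m
      = (EuclideanSpace.single k (1 : ℝ) : EuclideanSpace ℝ (Fin n)) m - 1 / n := by
    intro k m
    simp [simplexPt, hsum m]
  have hdiff : ∀ k : Fin n, simplexPt n k i - simplexPt n k j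
      = (EuclideanSpace.single k (1 : ℝ) : EuclideanSpace ℝ (Fin n)) i
        - (EuclideanSpace.single k (1 : ℝ) : EuclideanSpace ℝ (Fin n)) j := by
    intro k
    rw [hcoord k i, hcoord k j]; ring
  refine ⟨?_, ?_, ?_⟩
  · rw [hv]
    unfold reflHyp
    rw [hinn, hdiff, hnorm]
    have h1 : (EuclideanSpace.single i (1 : ℝ) : EuclideanSpace ℝ (Fin n)) i
        - (EuclideanSpace.single i (1 : ℝ) : EuclideanSpace ℝ (Fin n)) j = 1 := by
      simp [EuclideanSpace.single_apply, hij.symm]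
    rw [h1]
    norm_num
    rw [show (v = simplexPt n i - simplexPt n j) from hv.symm]
    abel
  · rw [hv]
    unfold reflHyp
    rw [hinn, hdiff, hnorm]
    have h1 : (EuclideanSpace.single j (1 : ℝ) : EuclideanSpace ℝ (Fin n)) i
        - (EuclideanSpace.single j (1 : ℝ) : EuclideanSpace ℝ (Fin n)) j = -1 := by
      simp [EuclideanSpace.single_apply, hij]
    rw [h1]
    norm_num
    rw [show (v = simplexPt n i - simplexPt n j) from hv.symm]
    abel
  · intro k hki hkj
    rw [hv]
    unfold reflHyp
    rw [hinn, hdiff, hnorm]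
    have h1 : (EuclideanSpace.single k (1 : ℝ) : EuclideanSpace ℝ (Fin n)) i
        - (EuclideanSpace.single k (1 : ℝ) : EuclideanSpace ℝ (Fin n)) j = 0 := by
      simp [EuclideanSpace.single_apply, hki.symm, hkj.symm]
    rw [h1]
    simp
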